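/- For every real $p$ with $1 < p \leq 2$ and every real $z \geq 0$, one has $z - (1+z)^p (1+2z)^{1-p} + (1+z)^{1-p} \geq 0$. -/

import Mathlib

open Real

private lemma bern_neg (t x : ℝ) (ht0 : 0 ≤ t) (hx : 0 ≤ x) :
    1 - (1 + t) * x ≤ (1 + x) ^ (-(1 + t)) := by
  have hbx : (0:ℝ) < 1 + x := by linarith
  rcases le_or_gt (1 - (1 + t) * x) 0 with h | h
  · exact h.trans (Real.rpow_pos_of_pos hbx _).le
  · have h2t : (0:ℝ) < 2 + t := by linarith
    have hw : 1 / (2 + t) + (1 + t) / (2 + t) = 1 := by field_simp; ring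
    have hgm := Real.geom_mean_le_arith_mean2_weighted
      (by positivity : (0:ℝ) ≤ 1 / (2 + t)) (by positivity : (0:ℝ) ≤ (1 + t) / (2 + t))
      h.le hbx.le hw
    have hrhs : 1 / (2 + t) * (1 - (1 + t) * x) + (1 + t) / (2 + t) * (1 + x) = 1 := by
      field_simp; ring
    rw [hrhs] at hgm
    have hpow := Real.rpow_le_rpow (by positivity) hgm h2t.le
    rw [Real.one_rpow, Real.mul_rpow (Real.rpow_nonneg h.le _) (Real.rpow_nonneg hbx.le _),
      ← Real.rpow_mul h.le, ← Real.rpow_mul hbx.le] at hpow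
    have e1 : 1 / (2 + t) * (2 + t) = 1 := by field_simp
    have e2 : (1 + t) / (2 + t) * (2 + t) = 1 + t := by field_simp
    rw [e1, e2, Real.rpow_one] at hpow
    have hb : (0:ℝ) < (1 + x) ^ (1 + t) := Real.rpow_pos_of_pos hbx _
    rw [Real.rpow_neg hbx.le, ← one_div, le_div_iff₀ hb]
    exact hpow

private lemma key_ineq (t : ℝ) (ht0 : 0 ≤ t) (ht1 : t ≤ 1) (x : ℝ)
    (hx0 : 0 ≤ x) (hx1 : x < 1) :
    (1 + x) ^ (-t) ≤ x + (1 - x) ^ (1 + t) := by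
  set g : ℝ → ℝ := fun y => y + (1 - y) ^ (1 + t) - (1 + y) ^ (-t) with hg
  have hderiv : ∀ y ∈ Set.Ico (0:ℝ) 1,
      HasDerivAt g (1 - (1 + t) * (1 - y) ^ t + t * (1 + y) ^ (-t - 1)) y := by
    intro y hy
    have hy1 : (0:ℝ) < 1 - y := by simpa using hy.2
    have hy2 : (0:ℝ) < 1 + y := by linarith [hy.1]
    have hu : HasDerivAt (fun y : ℝ => 1 - y) (-1) y := by
      simpa using (hasDerivAt_id y).const_sub 1
    have hv : HasDerivAt (fun y : ℝ => 1 + y) 1 y := by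
      simpa using (hasDerivAt_id y).const_add 1
    have h1 : HasDerivAt (fun y : ℝ => (1 - y) ^ (1 + t))
        ((-1) * (1 + t) * (1 - y) ^ (1 + t - 1)) y :=
      hu.rpow_const (Or.inl hy1.ne')
    have h2 : HasDerivAt (fun y : ℝ => (1 + y) ^ (-t))
        (1 * (-t) * (1 + y) ^ (-t - 1)) y :=
      hv.rpow_const (Or.inl hy2.ne')
    have := ((hasDerivAt_id y).add h1).sub h2
    refine this.congr_deriv ?_
    have : 1 + t - 1 = t := by ring
    rw [this]; ring
  have hnn : ∀ y ∈ Set.Ico (0:ℝ) 1,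
      0 ≤ 1 - (1 + t) * (1 - y) ^ t + t * (1 + y) ^ (-t - 1) := by
    intro y hy
    have hy1 : (0:ℝ) < 1 - y := by simpa using hy.2
    have hy2 : (0:ℝ) ≤ y := hy.1
    have hb1 : (1 - y) ^ t ≤ 1 - t * y := by
      have := rpow_one_add_le_one_add_mul_self (s := -y) (by linarith) ht0 ht1
      have e : 1 + -y = 1 - y := by ring
      rw [e] at this
      linarith [this]
    have hb2 : 1 - (1 + t) * y ≤ (1 + y) ^ (-(1 + t)) :=
      bern_neg t y ht0 hy2
    have e2 : -(1 + t) = -t - 1 := by ring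
    rw [e2] at hb2
    have step : (1 + t) * (1 - y) ^ t ≤ (1 + t) * (1 - t * y) :=
      mul_le_mul_of_nonneg_left hb1 (by linarith)
    have step2 : t * (1 - (1 + t) * y) ≤ t * (1 + y) ^ (-t - 1) :=
      mul_le_mul_of_nonneg_left hb2 ht0
    nlinarith [step, step2]
  have hmono : MonotoneOn g (Set.Ico (0:ℝ) 1) := by
    apply monotoneOn_of_deriv_nonneg (convex_Ico 0 1)
    · exact fun y hy => ((hderiv y hy).continuousAt).continuousWithinAt
    · rw [interior_Ico]
      exact fun y hy =>
        ((hderiv y (Set.Ioo_subset_Ico_self hy)).differentiableAt).differentiableWithinAt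
    · rw [interior_Ico]
      intro y hy
      rw [(hderiv y (Set.Ioo_subset_Ico_self hy)).deriv]
      exact hnn y (Set.Ioo_subset_Ico_self hy)
  have h0 : g 0 = 0 := by simp [hg]
  have hx : g 0 ≤ g x :=
    hmono ⟨le_refl 0, zero_lt_one⟩ ⟨hx0, hx1⟩ hx0
  rw [h0] at hx
  simp only [hg] at hx
  linarith

/-- For `1 < p ≤ 2` and `z ≥ 0`,
`z - (1+z)^p (1+2z)^(1-p) + (1+z)^(1-p) ≥ 0`. -/
theorem ineq_z (p : ℝ) (hp1 : 1 < p) (hp2 : p ≤ 2) (z : ℝ) (hz : 0 ≤ z) :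
    0 ≤ z - (1 + z) ^ p * (1 + 2 * z) ^ (1 - p) + (1 + z) ^ (1 - p) := by
  have hs : (0:ℝ) < 1 + z := by linarith
  have hs2 : (0:ℝ) < 1 + 2 * z := by linarith
  set t : ℝ := p - 1 with ht
  set x : ℝ := z / (1 + z) with hxdef
  have hx0 : 0 ≤ x := div_nonneg hz hs.le
  have hx1 : x < 1 := by rw [hxdef, div_lt_one hs]; linarith
  have hkey := key_ineq t (by linarith) (by linarith) x hx0 hx1
  have e1 : 1 - x = (1 + z)⁻¹ := by rw [hxdef]; field_simp; ring
  have e2 : 1 + x = (1 + 2 * z) / (1 + z) := by rw [hxdef]; field_simp; ring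
  have A : (1 + z) * x = z := by rw [hxdef]; field_simp
  have B : (1 + z) * (1 - x) ^ (1 + t) = (1 + z) ^ (1 - p) := by
    rw [e1, Real.inv_rpow hs.le, ← Real.rpow_neg hs.le]
    nth_rewrite 1 [show (1 + z) = (1 + z) ^ (1:ℝ) from (Real.rpow_one _).symm]
    rw [← Real.rpow_add hs]
    congr 1
    rw [ht]; ring
  have C : (1 + z) * (1 + x) ^ (-t) = (1 + z) ^ p * (1 + 2 * z) ^ (1 - p) := by
    rw [e2, Real.div_rpow hs2.le hs.le, show -t = 1 - p from by rw [ht]; ring]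
    rw [div_eq_mul_inv, ← Real.rpow_neg hs.le,
      mul_comm ((1 + 2 * z) ^ (1 - p)) ((1 + z) ^ (-(1 - p))), ← mul_assoc]
    nth_rewrite 1 [show (1 + z) = (1 + z) ^ (1:ℝ) from (Real.rpow_one _).symm]
    rw [← Real.rpow_add hs, show (1:ℝ) + -(1 - p) = p from by ring]
  have hsum : 0 ≤ x + (1 - x) ^ (1 + t) - (1 + x) ^ (-t) := by linarith [hkey]
  have expand : (1 + z) * (x + (1 - x) ^ (1 + t) - (1 + x) ^ (-t))
      = z - (1 + z) ^ p * (1 + 2 * z) ^ (1 - p) + (1 + z) ^ (1 - p) := by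
    rw [mul_sub, mul_add, A, B, C]; ring
  have final := mul_nonneg hs.le hsum
  rw [expand] at final
  exact final
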